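/- Let p be a prime and, for each integer e ≥ 0, let a^{cyc}_{p^e} denote the number of cocyclic (unital) subrings of R = ℤ[t]/(t³) of additive index p^e. Then in the formal power series ring ℤ⟦X⟧ one has (∑_{e ≥ 0} a^{cyc}_{p^e} X^e) · (1 − p²X³) = 1 + X + pX². -/

import Mathlib

open Polynomial

/-- `R = ℤ[t]/(t³)`. -/
abbrev R3 : Type := ℤ[X] ⧸ Ideal.span ({X ^ 3} : Set ℤ[X])

noncomputable def pb : PowerBasis ℤ R3 := AdjoinRoot.powerBasis' (monic_X_pow 3)

lemma pbdim : pb.dim = 3 := natDegree_X_pow 3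

noncomputable def B : Module.Basis (Fin 3) ℤ R3 := pb.basis.reindex (finCongr pbdim)

noncomputable def tt : R3 := AdjoinRoot.root (X ^ 3 : ℤ[X])

lemma B_apply (i : Fin 3) : B i = tt ^ (i : ℕ) := by
  rw [B, Module.Basis.reindex_apply, pb.basis_eq_pow]
  rfl

lemma t3 : tt ^ 3 = 0 := by
  have : tt ^ 3 = AdjoinRoot.mk (X ^ 3 : ℤ[X]) (X ^ 3) := by
    rw [tt, map_pow, AdjoinRoot.mk_X]; rfl
  rw [AdjoinRoot.mk_self] at this; exact this

/-- coordinates -/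
noncomputable def c (i : Fin 3) : R3 →ₗ[ℤ] ℤ := B.coord i

lemma decomp (x : R3) : x = c 0 x • (1 : R3) + c 1 x • tt + c 2 x • tt ^ 2 := by
  have h := B.sum_repr x
  rw [Fin.sum_univ_three] at h
  simp only [B_apply] at h
  simpa [c, Module.Basis.coord_apply, pow_zero, pow_one] using h.symm

lemma c_one (i : Fin 3) : c i (1 : R3) = if i = 0 then 1 else 0 := by
  have : (1 : R3) = B 0 := by rw [B_apply]; norm_num
  rw [this]; simp [c, Module.Basis.repr_self]
  rcases i with ⟨i, hi⟩
  interval_cases i <;> simp [Finsupp.single_apply]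

lemma c_tt (i : Fin 3) : c i tt = if i = 1 then 1 else 0 := by
  have : tt = B 1 := by rw [B_apply]; norm_num
  rw [this]; simp [c, Module.Basis.repr_self]
  rcases i with ⟨i, hi⟩
  interval_cases i <;> simp [Finsupp.single_apply]

lemma c_tt2 (i : Fin 3) : c i (tt ^ 2) = if i = 2 then 1 else 0 := by
  have : tt ^ 2 = B 2 := by rw [B_apply]; norm_num
  rw [this]; simp [c, Module.Basis.repr_self]
  rcases i with ⟨i, hi⟩
  interval_cases i <;> simp [Finsupp.single_apply]

lemma c_lin (i : Fin 3) (A B C : ℤ) :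
    c i (A • (1 : R3) + B • tt + C • tt ^ 2) = ![A, B, C] i := by
  simp only [map_add, map_smul, c_one, c_tt, c_tt2, smul_eq_mul]
  rcases i with ⟨i, hi⟩
  interval_cases i <;> simp

lemma smul_cast (A : ℤ) (x : R3) : A • x = (A : R3) * x := by
  rw [zsmul_eq_mul]

lemma mul_decomp (x y : R3) : x * y =
    (c 0 x * c 0 y) • (1 : R3) + (c 0 x * c 1 y + c 1 x * c 0 y) • tt +
      (c 0 x * c 2 y + c 1 x * c 1 y + c 2 x * c 0 y) • tt ^ 2 := by
  have hx := decomp x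
  have hy := decomp y
  rw [smul_cast, smul_cast, smul_cast] at hx hy
  rw [smul_cast, smul_cast, smul_cast]
  push_cast
  have ht := t3
  linear_combination y * hx + ((c 0 x : R3) + (c 1 x : R3) * tt + (c 2 x : R3) * tt ^ 2) * hy +
    ((c 1 x : R3) * (c 2 y : R3) + (c 2 x : R3) * (c 1 y : R3) + (c 2 x : R3) * (c 2 y : R3) * tt) * ht

lemma c1_mul (x y : R3) : c 1 (x * y) = c 0 x * c 1 y + c 1 x * c 0 y := by
  rw [mul_decomp x y, c_lin]; rfl

lemma c2_mul (x y : R3) : c 2 (x * y) = c 0 x * c 2 y + c 1 x * c 1 y + c 2 x * c 0 y := by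
  rw [mul_decomp x y, c_lin]; rfl

lemma c1_one : c 1 (1 : R3) = 0 := by rw [c_one]; rfl
lemma c2_one : c 2 (1 : R3) = 0 := by rw [c_one]; rfl

/-- The additive character attached to `b`. -/
noncomputable def qmap (n : ℕ) (b : ZMod n) : R3 →+ ZMod n where
  toFun x := (c 1 x : ZMod n) + b * (c 2 x : ZMod n)
  map_zero' := by simp
  map_add' x y := by push_cast [map_add]; ring

lemma qmap_apply (n : ℕ) (b : ZMod n) (x : R3) :
    qmap n b x = (c 1 x : ZMod n) + b * (c 2 x : ZMod n) := rfl

/-- The subring attached to `b` with `b ^ 3 = 0`. -/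
noncomputable def Sset (n : ℕ) (b : ZMod n) (hb : b ^ 3 = 0) : Subring R3 where
  carrier := {x | qmap n b x = 0}
  zero_mem' := by simp [qmap_apply]
  one_mem' := by simp [qmap_apply, c1_one, c2_one]
  add_mem' {x y} hx hy := by
    simp only [Set.mem_setOf_eq, map_add] at *
    rw [hx, hy, add_zero]
  neg_mem' {x} hx := by
    simp only [Set.mem_setOf_eq, map_neg] at *
    rw [hx, neg_zero]
  mul_mem' {x y} hx hy := by
    simp only [Set.mem_setOf_eq, qmap_apply] at *
    rw [c1_mul, c2_mul]
    push_cast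
    linear_combination (c 0 x : ZMod n) * hy + (c 0 y : ZMod n) * hx +
      b * (c 1 x : ZMod n) * hy - b ^ 2 * (c 2 y : ZMod n) * hx +
      (c 2 x : ZMod n) * (c 2 y : ZMod n) * hb

lemma mem_Sset {n : ℕ} {b : ZMod n} {hb : b ^ 3 = 0} {x : R3} :
    x ∈ Sset n b hb ↔ qmap n b x = 0 := Iff.rfl

lemma c1_tt : c 1 tt = 1 := by rw [c_tt]; rfl
lemma c2_tt : c 2 tt = 0 := by rw [c_tt]; rfl
lemma c0_tt : c 0 tt = 0 := by rw [c_tt]; rfl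
lemma c0_one : c 0 (1 : R3) = 1 := by rw [c_one]; rfl
lemma c1_tt2 : c 1 (tt ^ 2) = 0 := by rw [c_tt2]; rfl
lemma c2_tt2 : c 2 (tt ^ 2) = 1 := by rw [c_tt2]; rfl
lemma c0_tt2 : c 0 (tt ^ 2) = 0 := by rw [c_tt2]; rfl

lemma qmap_tt (n : ℕ) (b : ZMod n) : qmap n b tt = 1 := by
  simp [qmap_apply, c1_tt, c2_tt]

lemma qmap_surj (n : ℕ) (b : ZMod n) : Function.Surjective (qmap n b) := by
  intro z
  obtain ⟨k, rfl⟩ := ZMod.intCast_surjective z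
  exact ⟨k • tt, by rw [map_zsmul, qmap_tt, zsmul_eq_mul, mul_one]⟩

lemma Sset_toAddSubgroup (n : ℕ) (b : ZMod n) (hb : b ^ 3 = 0) :
    (Sset n b hb).toAddSubgroup = (qmap n b).ker := by
  ext x; rfl

lemma Sset_index (n : ℕ) (b : ZMod n) (hb : b ^ 3 = 0) :
    (Sset n b hb).toAddSubgroup.index = n := by
  rw [Sset_toAddSubgroup, AddSubgroup.index_ker]
  rw [AddMonoidHom.range_eq_top_of_surjective _ (qmap_surj n b)]
  rw [Nat.card_congr AddSubgroup.topEquiv.toEquiv, Nat.card_zmod]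

lemma Sset_cyclic (n : ℕ) (b : ZMod n) (hb : b ^ 3 = 0) :
    IsAddCyclic (R3 ⧸ (Sset n b hb).toAddSubgroup) := by
  rw [Sset_toAddSubgroup]
  have e := QuotientAddGroup.quotientKerEquivOfSurjective (qmap n b) (qmap_surj n b)
  exact isAddCyclic_of_surjective e.symm.toAddMonoidHom e.symm.surjective

lemma unit_or_unit {p e : ℕ} (hp : p.Prime) {a b u v : ZMod (p ^ e)}
    (h : u * a + v * b = 1) : IsUnit a ∨ IsUnit b := by
  rcases Nat.eq_zero_or_pos e with he | he
  · subst he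
    left
    haveI : Subsingleton (ZMod (p ^ 0)) := by rw [pow_zero]; infer_instance
    exact isUnit_of_subsingleton a
  by_contra hab
  push_neg at hab
  obtain ⟨ha, hb⟩ := hab
  haveI : NeZero (p ^ e) := ⟨pow_ne_zero e hp.pos.ne'⟩
  have hdvd : ∀ x : ZMod (p ^ e), ¬IsUnit x → p ∣ x.val := by
    intro x hx
    by_contra hpx
    apply hx
    have : IsUnit ((x.val : ℕ) : ZMod (p ^ e)) := by
      rw [ZMod.isUnit_iff_coprime]
      exact ((Nat.Prime.coprime_iff_not_dvd hp).mpr hpx).symm.pow_right e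
    rwa [ZMod.natCast_val, ZMod.cast_id] at this
  have f := ZMod.castHom (dvd_pow_self p he.ne') (ZMod p)
  have hfa : f a = 0 := by
    rw [show a = ((a.val : ℕ) : ZMod (p ^ e)) by rw [ZMod.natCast_val, ZMod.cast_id],
      map_natCast, ZMod.natCast_eq_zero_iff]
    exact hdvd a ha
  have hfb : f b = 0 := by
    rw [show b = ((b.val : ℕ) : ZMod (p ^ e)) by rw [ZMod.natCast_val, ZMod.cast_id],
      map_natCast, ZMod.natCast_eq_zero_iff]
    exact hdvd b hb
  haveI : Fact p.Prime := ⟨hp⟩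
  have h2 := congrArg f h
  rw [map_add, map_mul, map_mul, hfa, hfb, mul_zero, mul_zero, add_zero, map_one] at h2
  exact zero_ne_one h2

lemma classify {p e : ℕ} (hp : p.Prime) (S : Subring R3)
    (hidx : S.toAddSubgroup.index = p ^ e)
    (hcyc : IsAddCyclic (R3 ⧸ S.toAddSubgroup)) :
    ∃ (b : ZMod (p ^ e)) (hb : b ^ 3 = 0), S = Sset (p ^ e) b hb := by
  set n := p ^ e with hn
  set H := S.toAddSubgroup with hH
  have hcard : Nat.card (R3 ⧸ H) = n := by rw [← AddSubgroup.index_eq_card]; exact hidx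
  let ψ : R3 ⧸ H ≃+ ZMod n :=
    ((zmodAddCyclicAddEquiv hcyc).symm.trans (ZMod.ringEquivCongr hcard).toAddEquiv)
  let q : R3 →+ ZMod n := ψ.toAddMonoidHom.comp (QuotientAddGroup.mk' H)
  have hqx : ∀ x : R3, q x = ψ (QuotientAddGroup.mk' H x) := fun x => rfl
  have hker : ∀ x : R3, x ∈ S ↔ q x = 0 := by
    intro x
    rw [hqx, ψ.map_eq_zero_iff, QuotientAddGroup.mk'_apply,
      QuotientAddGroup.eq_zero_iff]
    exact Iff.rfl
  have hsurj : Function.Surjective q := by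
    intro z
    obtain ⟨y, hy⟩ := ψ.surjective z
    obtain ⟨x, hx⟩ := QuotientAddGroup.mk'_surjective H y
    exact ⟨x, by rw [hqx, hx, hy]⟩
  set a := q tt with ha
  set b1 := q (tt ^ 2) with hb1
  have hq1 : q 1 = 0 := (hker 1).1 S.one_mem
  have key : ∀ x : R3, q x = (c 1 x : ZMod n) * a + (c 2 x : ZMod n) * b1 := by
    intro x
    conv_lhs => rw [decomp x]
    rw [map_add, map_add, map_zsmul, map_zsmul, map_zsmul, hq1, smul_zero,
      zsmul_eq_mul, zsmul_eq_mul, zero_add]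
  have hmem : ∀ x : R3, x ∈ S ↔ (c 1 x : ZMod n) * a + (c 2 x : ZMod n) * b1 = 0 := by
    intro x; rw [hker x, key x]
  -- a is a unit
  have hA : IsUnit a := by
    by_contra hna
    obtain ⟨x, hx⟩ := hsurj 1
    rw [key x] at hx
    have hb1u : IsUnit b1 := (unit_or_unit hp hx).resolve_left hna
    obtain ⟨bu, hbu⟩ := hb1u
    obtain ⟨z₂, hz₂⟩ := ZMod.intCast_surjective (-a * (↑bu⁻¹ : ZMod n))
    set s : R3 := tt + z₂ • tt ^ 2 with hs
    have hcs0 : c 0 s = 0 := by rw [hs, map_add, map_zsmul, c0_tt, c0_tt2, smul_zero, add_zero]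
    have hcs1 : c 1 s = 1 := by rw [hs, map_add, map_zsmul, c1_tt, c1_tt2, smul_zero, add_zero]
    have hcs2 : c 2 s = z₂ := by
      rw [hs, map_add, map_zsmul, c2_tt, c2_tt2, smul_eq_mul, mul_one, zero_add]
    have hsS : s ∈ S := by
      rw [hmem, hcs1, hcs2, hz₂]
      have : (↑bu⁻¹ : ZMod n) * ↑bu = 1 := bu.inv_mul
      rw [← hbu]
      push_cast
      linear_combination (-a) * this
    have hssS := (hmem _).1 (S.mul_mem hsS hsS)
    rw [c1_mul, c2_mul, hcs0, hcs1, hcs2] at hssS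
    have hb10 : b1 = 0 := by
      push_cast at hssS
      linear_combination hssS
    rw [hb10] at hbu
    have h01 : (0 : ZMod n) = 1 := by rw [← bu.inv_mul, hbu, mul_zero]
    haveI : Subsingleton (ZMod n) := subsingleton_of_zero_eq_one h01
    exact hna (isUnit_of_subsingleton a)
  obtain ⟨au, hau⟩ := hA
  set b0 : ZMod n := (↑au⁻¹ : ZMod n) * b1 with hb0def
  have hinv : (↑au⁻¹ : ZMod n) * ↑au = 1 := au.inv_mul
  have hmem' : ∀ x : R3, x ∈ S ↔ (c 1 x : ZMod n) + b0 * (c 2 x : ZMod n) = 0 := by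
    intro x
    rw [hmem]
    constructor
    · intro h
      have := congrArg (fun z => (↑au⁻¹ : ZMod n) * z) h
      simp only [mul_zero] at this
      rw [← this, ← hau, hb0def]
      linear_combination (-(c 1 x : ZMod n)) * hinv
    · intro h
      have := congrArg (fun z => (↑au : ZMod n) * z) h
      simp only [mul_zero] at this
      rw [← this, ← hau, hb0def]
      linear_combination (-(c 2 x : ZMod n) * b1) * hinv
  -- b0 ^ 3 = 0
  obtain ⟨Bz, hBz⟩ := ZMod.intCast_surjective b0
  set s' : R3 := (-Bz) • tt + tt ^ 2 with hs'
  have hcs'0 : c 0 s' = 0 := by rw [hs', map_add, map_zsmul, c0_tt, c0_tt2, smul_zero, add_zero]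
  have hcs'1 : c 1 s' = -Bz := by
    rw [hs', map_add, map_zsmul, c1_tt, c1_tt2, smul_eq_mul, mul_one, add_zero]
  have hcs'2 : c 2 s' = 1 := by rw [hs', map_add, map_zsmul, c2_tt, c2_tt2, smul_zero, zero_add]
  have hs'S : s' ∈ S := by
    rw [hmem', hcs'1, hcs'2]
    push_cast [hBz]
    ring
  have hss'S := (hmem' _).1 (S.mul_mem hs'S hs'S)
  rw [c1_mul, c2_mul, hcs'0, hcs'1, hcs'2] at hss'S
  have hb3 : b0 ^ 3 = 0 := by
    push_cast at hss'S
    rw [hBz] at hss'S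
    linear_combination hss'S
  refine ⟨b0, hb3, ?_⟩
  ext x
  rw [mem_Sset, qmap_apply]
  exact hmem' x

lemma Sset_inj {n : ℕ} {b b' : ZMod n} {hb : b ^ 3 = 0} {hb' : b' ^ 3 = 0}
    (h : Sset n b hb = Sset n b' hb') : b = b' := by
  obtain ⟨Bz, hBz⟩ := ZMod.intCast_surjective b
  set s : R3 := (-Bz) • tt + tt ^ 2 with hs
  have hcs1 : c 1 s = -Bz := by
    rw [hs, map_add, map_zsmul, c1_tt, c1_tt2, smul_eq_mul, mul_one, add_zero]
  have hcs2 : c 2 s = 1 := by rw [hs, map_add, map_zsmul, c2_tt, c2_tt2, smul_zero, zero_add]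
  have h1 : s ∈ Sset n b hb := by
    rw [mem_Sset, qmap_apply, hcs1, hcs2]
    push_cast [hBz]
    ring
  rw [h, mem_Sset, qmap_apply, hcs1, hcs2] at h1
  push_cast [hBz] at h1
  linear_combination -h1

lemma dvd_of_cube {p : ℕ} (hp : p.Prime) (e x : ℕ) (h : p ^ e ∣ x ^ 3) :
    p ^ ((e + 2) / 3) ∣ x := by
  rcases eq_or_ne x 0 with rfl | hx
  · exact dvd_zero _
  · have hx3 : x ^ 3 ≠ 0 := pow_ne_zero _ hx
    rw [Nat.Prime.pow_dvd_iff_le_factorization hp hx3, Nat.factorization_pow,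
      Finsupp.smul_apply, smul_eq_mul] at h
    rw [Nat.Prime.pow_dvd_iff_le_factorization hp hx]
    omega

lemma count_nilp (p e : ℕ) (hp : p.Prime) :
    Nat.card {b : ZMod (p ^ e) // b ^ 3 = 0} = p ^ (e - (e + 2) / 3) := by
  haveI : NeZero (p ^ e) := ⟨pow_ne_zero e hp.pos.ne'⟩
  set cc := (e + 2) / 3 with hcc
  have key : ∀ b : ZMod (p ^ e), b ^ 3 = 0 ↔
      b ∈ AddSubgroup.zmultiples ((p ^ cc : ℕ) : ZMod (p ^ e)) := by
    intro b
    constructor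
    · intro hb
      have hbv : ((b.val ^ 3 : ℕ) : ZMod (p ^ e)) = 0 := by
        push_cast [ZMod.natCast_val, ZMod.cast_id]
        exact hb
      rw [ZMod.natCast_eq_zero_iff] at hbv
      obtain ⟨k, hk⟩ := dvd_of_cube hp e b.val hbv
      rw [AddSubgroup.mem_zmultiples_iff]
      refine ⟨(k : ℤ), ?_⟩
      rw [zsmul_eq_mul]
      push_cast
      rw [mul_comm, ← Nat.cast_pow, ← Nat.cast_mul, ← hk, ZMod.natCast_val, ZMod.cast_id]
    · intro hb
      rw [AddSubgroup.mem_zmultiples_iff] at hb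
      obtain ⟨k, hk⟩ := hb
      rw [zsmul_eq_mul] at hk
      rw [← hk]
      have h3 : ((p : ℕ) ^ (3 * cc) : ℕ) = (p ^ cc : ℕ) ^ 3 := by ring
      have hz : (((p ^ cc : ℕ) : ZMod (p ^ e)) : ZMod (p ^ e)) ^ 3 = 0 := by
        rw [← Nat.cast_pow, ← h3, ZMod.natCast_eq_zero_iff]
        exact pow_dvd_pow p (by omega)
      rw [mul_pow]
      rw [hz, mul_zero]
    
  rw [Nat.card_congr (Equiv.subtypeEquivRight key), Nat.card_zmultiples,
    ZMod.addOrderOf_coe _ (NeZero.ne (p ^ e))]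
  have hle : cc ≤ e := by omega
  rw [Nat.gcd_eq_right (pow_dvd_pow p hle), Nat.pow_div hle hp.pos]

/-- The number of cocyclic unital subrings of `ℤ[t]/(t³)` of additive index `n`,
i.e. those whose additive quotient group is cyclic. -/
noncomputable def numCocyclicSubrings (n : ℕ) : ℕ :=
  Nat.card {S : Subring R3 //
    S.toAddSubgroup.index = n ∧ IsAddCyclic (R3 ⧸ S.toAddSubgroup)}

lemma numCocyclic_eq (p e : ℕ) (hp : p.Prime) :
    numCocyclicSubrings (p ^ e) = p ^ (e - (e + 2) / 3) := by
  rw [numCocyclicSubrings, ← count_nilp p e hp]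
  refine (Nat.card_eq_of_bijective (fun b : {b : ZMod (p ^ e) // b ^ 3 = 0} =>
    (⟨Sset (p ^ e) b.1 b.2, Sset_index _ _ _, Sset_cyclic _ _ _⟩ :
      {S : Subring R3 //
        S.toAddSubgroup.index = p ^ e ∧ IsAddCyclic (R3 ⧸ S.toAddSubgroup)})) ⟨?_, ?_⟩).symm
  · intro b b' h
    exact Subtype.ext (Sset_inj (hb := b.2) (hb' := b'.2) (congrArg Subtype.val h))
  · rintro ⟨S, hidx, hcyc⟩
    obtain ⟨b, hb, hS⟩ := classify hp S hidx hcyc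
    exact ⟨⟨b, hb⟩, Subtype.ext hS.symm⟩

theorem stmt16 (p : ℕ) (hp : p.Prime) :
    (PowerSeries.mk fun e : ℕ => (numCocyclicSubrings (p ^ e) : ℤ)) *
      (1 - (p : PowerSeries ℤ) ^ 2 * PowerSeries.X ^ 3) =
    1 + PowerSeries.X + (p : PowerSeries ℤ) * PowerSeries.X ^ 2 := by
  have hA : ∀ e : ℕ, (numCocyclicSubrings (p ^ e) : ℤ) = (p : ℤ) ^ (e - (e + 2) / 3) := by
    intro e; rw [numCocyclic_eq p e hp]; push_cast; ring
  have hC : ((p : PowerSeries ℤ)) = PowerSeries.C (p : ℤ) :=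
    (map_natCast (PowerSeries.C) p).symm
  ext n
  rw [mul_sub, mul_one, map_sub, PowerSeries.coeff_mk]
  rw [show (PowerSeries.mk fun e : ℕ => (numCocyclicSubrings (p ^ e) : ℤ)) *
      ((p : PowerSeries ℤ) ^ 2 * PowerSeries.X ^ 3) =
      PowerSeries.C ((p : ℤ) ^ 2) *
        ((PowerSeries.mk fun e : ℕ => (numCocyclicSubrings (p ^ e) : ℤ)) * PowerSeries.X ^ 3)
    from by rw [hC, ← map_pow]; ring]
  rw [PowerSeries.coeff_C_mul, PowerSeries.coeff_mul_X_pow', map_add, map_add,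
    PowerSeries.coeff_one, PowerSeries.coeff_X, hC, PowerSeries.coeff_C_mul,
    PowerSeries.coeff_X_pow]
  rcases n with _ | _ | _ | n
  · have h := numCocyclic_eq p 0 hp
    norm_num at h ⊢
    exact_mod_cast h
  · have h := numCocyclic_eq p 1 hp
    norm_num at h ⊢
    exact_mod_cast h
  · have h := numCocyclic_eq p 2 hp
    norm_num at h ⊢
    exact_mod_cast h
  · have h3 : 3 ≤ n + 3 := by omega
    rw [if_pos h3, if_neg (by omega), if_neg (by omega), if_neg (by omega)]
    have hsub : n + 3 - 3 = n := by omega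
    rw [hsub, PowerSeries.coeff_mk, hA, hA]
    have he : (n + 3) - ((n + 3) + 2) / 3 = 2 + (n - (n + 2) / 3) := by omega
    rw [he, pow_add]
    ring
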